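/- In the twisted Heisenberg-Virasoro Verma module with c_I = 0, c_{L,I} ≠ 0 and h_I = 3c_{L,I} (so p = 2), the vector (I(-2) - (1/c_{L,I})I(-1)²)·v is a singular vector, and equals (up to the nonzero scalar 1/(2c_{L,I}²) adjustment) S_2(-I(-1)/c_{L,I}, -I(-2)/c_{L,I})·v where S_2(x_1, x_2) = (x_1² + x_2)/2. -/

import Mathlib

/-- The Schur polynomials `S_r(x_1, x_2, ...)`, defined as the coefficients of the
generating function `exp (∑_{n ≥ 1} (x_n/n) y^n) = ∑_{r ≥ 0} S_r y^r`.  Since the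
series `g = ∑_{n ≥ 1} (x_n/n) y^n` has zero constant term, the coefficient of `y^r`
in `exp g = ∑_k g^k / k!` only receives contributions from `k ≤ r`. -/
noncomputable def schur {A : Type*} [Ring A] [Algebra ℂ A] (x : ℕ → A) (r : ℕ) : A :=
  ∑ k ∈ Finset.range (r + 1),
    ((Nat.factorial k : ℂ)⁻¹) •
      (PowerSeries.coeff (R := A) r
        ((PowerSeries.mk fun n => if n = 0 then 0 else ((n : ℂ)⁻¹) • x n) ^ k))

/-- The generalized binomial coefficient `binom(z, r) = z(z-1)⋯(z-r+1)/r!`. -/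
noncomputable def cchoose (z : ℂ) (r : ℕ) : ℂ :=
  (∏ i ∈ Finset.range r, (z - i)) / (Nat.factorial r)


/-- A representation of the twisted Heisenberg-Virasoro algebra `HVir` at level zero
(`C_I` acts by `0`), with the central elements `C_L`, `C_{LI}` acting by the scalars
`cL`, `cLI`. -/
structure HVirRep (V : Type*) [AddCommGroup V] [Module ℂ V] where
  L : ℤ → Module.End ℂ V
  I : ℤ → Module.End ℂ V
  cL : ℂ
  cLI : ℂ
  rel_LL : ∀ n m : ℤ, L n * L m - L m * L n =
    ((n : ℂ) - m) • L (n + m) +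
      (if n + m = 0 then (((n : ℂ) ^ 3 - n) / 12) * cL else 0) • (1 : Module.End ℂ V)
  rel_LI : ∀ n m : ℤ, L n * I m - I m * L n =
    (-(m : ℂ)) • I (n + m) -
      (if n + m = 0 then ((n : ℂ) ^ 2 + n) * cLI else 0) • (1 : Module.End ℂ V)
  rel_II : ∀ n m : ℤ, I n * I m = I m * I n

/-- In any highest weight representation of the twisted Heisenberg-Virasoro algebra at
level zero with `c_{L,I} ≠ 0` and highest weight `(h, h_I) = (h, 3c_{L,I})` (so `p = 2`),
the vector `Ω = (I(-2) - (1/c_{L,I}) I(-1)²) v` is a singular vector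
(`L(n)Ω = I(n)Ω = 0` for all `n ≥ 1`), and it equals
`-2c_{L,I} · S_2(-I(-1)/c_{L,I}, -I(-2)/c_{L,I}) v`, where `S_2(x₁,x₂) = (x₁² + x₂)/2`,
i.e. it agrees with the Schur-polynomial singular vector up to a nonzero scalar. -/
lemma schur_two {A : Type*} [Ring A] [Algebra ℂ A] (x : ℕ → A) :
    schur x 2 = (2:ℂ)⁻¹ • x 2 + (2:ℂ)⁻¹ • (x 1 * x 1) := by
  unfold schur
  rw [Finset.sum_range_succ, Finset.sum_range_succ, Finset.sum_range_one]
  rw [pow_two, PowerSeries.coeff_mul, Finset.Nat.sum_antidiagonal_eq_sum_range_succ_mk]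
  simp [Finset.sum_range_succ, Nat.factorial, smul_smul]

theorem singular_vector_hI_three_cLI {V : Type*} [AddCommGroup V] [Module ℂ V]
    (ρ : HVirRep V) (v : V) (h : ℂ) (hc : ρ.cLI ≠ 0)
    (hLv : ∀ n : ℤ, 0 < n → ρ.L n v = 0) (hIv : ∀ n : ℤ, 0 < n → ρ.I n v = 0)
    (hL0 : ρ.L 0 v = h • v) (hI0 : ρ.I 0 v = (3 * ρ.cLI) • v) :
    (∀ n : ℤ, 1 ≤ n →
        ρ.L n (ρ.I (-2) v - (ρ.cLI)⁻¹ • ρ.I (-1) (ρ.I (-1) v)) = 0 ∧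
        ρ.I n (ρ.I (-2) v - (ρ.cLI)⁻¹ • ρ.I (-1) (ρ.I (-1) v)) = 0) ∧
      ρ.I (-2) v - (ρ.cLI)⁻¹ • ρ.I (-1) (ρ.I (-1) v) =
        (-2 * ρ.cLI) • ((schur (fun j => (-(ρ.cLI)⁻¹) • ρ.I (-(j : ℤ))) 2) v) := by
  have comLI : ∀ (n m : ℤ) (w : V), ρ.L n (ρ.I m w) =
      ρ.I m (ρ.L n w) + (-(m:ℂ)) • ρ.I (n+m) w -
        (if n + m = 0 then ((n:ℂ)^2 + n) * ρ.cLI else 0) • w := by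
    intro n m w
    have h1 := congrArg (fun f : Module.End ℂ V => f w) (ρ.rel_LI n m)
    simp only [LinearMap.sub_apply, Module.End.mul_apply, LinearMap.add_apply,
      LinearMap.smul_apply, Module.End.one_apply] at h1
    have h2 := sub_eq_iff_eq_add.mp h1
    rw [h2]; abel
  have comII : ∀ (n m : ℤ) (w : V), ρ.I n (ρ.I m w) = ρ.I m (ρ.I n w) := by
    intro n m w
    have h1 := congrArg (fun f : Module.End ℂ V => f w) (ρ.rel_II n m)
    simpa only [Module.End.mul_apply] using h1
  constructor
  · intro n hn
    have hn0 : 0 < n := hn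
    constructor
    · -- L part
      rcases eq_or_lt_of_le hn with e1 | h1
      · -- n = 1
        subst e1
        have B1 : ρ.L 1 (ρ.I (-1) v) = ρ.cLI • v := by
          have E := comLI 1 (-1) v
          norm_num at E
          rw [E, hLv 1 one_pos, hI0]
          simp; module
        have A1 : ρ.L 1 (ρ.I (-2) v) = (2:ℂ) • ρ.I (-1) v := by
          have E := comLI 1 (-2) v
          norm_num at E
          rw [E, hLv 1 one_pos]
          simp
        have C1 : ρ.L 1 (ρ.I (-1) (ρ.I (-1) v)) = (2 * ρ.cLI) • ρ.I (-1) v := by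
          have E := comLI 1 (-1) (ρ.I (-1) v)
          norm_num at E
          rw [E, B1, comII 0 (-1) v, hI0, map_smul, map_smul]
          module
        rw [map_sub, map_smul, A1, C1]
        match_scalars
        field_simp
        ring
      · by_cases e2 : n = 2
        · subst e2
          have A2 : ρ.L 2 (ρ.I (-2) v) = 0 := by
            have E := comLI 2 (-2) v
            norm_num at E
            rw [E, hLv 2 (by norm_num), hI0, map_zero]
            match_scalars; ring
          have B2 : ρ.L 2 (ρ.I (-1) v) = 0 := by
            have E := comLI 2 (-1) v
            norm_num at E
            rw [E, hLv 2 (by norm_num), hIv 1 one_pos, map_zero]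
            simp
          have C2 : ρ.L 2 (ρ.I (-1) (ρ.I (-1) v)) = 0 := by
            have E := comLI 2 (-1) (ρ.I (-1) v)
            norm_num at E
            rw [E, B2, comII 1 (-1) v, hIv 1 one_pos, map_zero]
            simp
          rw [map_sub, map_smul, A2, C2]
          simp
        · -- n ≥ 3
          rw [map_sub, map_smul, comLI n (-2) v, comLI n (-1) (ρ.I (-1) v), comLI n (-1) v,
            hLv n hn0, hIv (n + -2) (by omega), hIv (n + -1) (by omega),
            if_neg (show ¬ n + -2 = 0 by omega), if_neg (show ¬ n + -1 = 0 by omega),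
            comII (n + -1) (-1) v, hIv (n + -1) (by omega)]
          simp
    · -- I part
      rw [map_sub, map_smul, comII n (-2) v, comII n (-1) (ρ.I (-1) v), comII n (-1) v,
        hIv n hn0]
      simp
  · rw [schur_two]
    simp only [LinearMap.add_apply, LinearMap.smul_apply, Module.End.mul_apply, map_smul,
      Nat.cast_ofNat, Nat.cast_one]
    match_scalars <;> (field_simp; try ring)
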